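/- Let K be a field and F/K a Galois extension of degree 3 such that every proper finite separable extension of K contains F. Then for each n, K has at most one separable field extension of degree n up to isomorphism. -/

import Mathlib

open Subgroup in
lemma cyclic_subgroup_eq_of_card_eq {α : Type*} [Group α] [Finite α] [IsCyclic α]
    (H K : Subgroup α) (h : Nat.card H = Nat.card K) : H = K := by
  classical
  have : Fintype α := Fintype.ofFinite α
  have key : ∀ J : Subgroup α, (J : Set α).toFinset
      = Finset.univ.filter (fun a => a ^ Nat.card J = 1) := by
    intro J
    have hpos : 0 < Nat.card J := Nat.card_pos
    refine Finset.eq_of_subset_of_card_le ?_ ?_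
    · intro x hx
      rw [Set.mem_toFinset, SetLike.mem_coe] at hx
      rw [Finset.mem_filter]
      refine ⟨Finset.mem_univ x, ?_⟩
      have h0 := congrArg Subtype.val (pow_card_eq_one' (G := J) (x := ⟨x, hx⟩))
      push_cast at h0
      simpa using h0
    · have h1 : ((J : Set α).toFinset).card = Nat.card J := by
        simp [Set.toFinset_card, Nat.card_eq_fintype_card]
      rw [h1]
      simpa [Nat.card_eq_fintype_card] using IsCyclic.card_pow_eq_one_le (α := α) hpos
  have h2 : ((H : Set α).toFinset) = ((K : Set α).toFinset) := by rw [key H, key K, h]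
  rw [Set.toFinset_inj] at h2
  exact SetLike.coe_injective h2

/-- If `M/K` is finite Galois and every nontrivial finite separable extension of `K`
receives `F` (which is Galois of degree 3), then `Gal(M/K)` is cyclic. -/
lemma aux_cyclic (K F M : Type) [Field K] [Field F] [Field M] [Algebra K F] [IsGalois K F]
    (h3 : Module.finrank K F = 3) [Algebra K M] [FiniteDimensional K M] [IsGalois K M]
    (hmin : ∀ (L : Type) [Field L] [Algebra K L] [FiniteDimensional K L]
      [Algebra.IsSeparable K L], Module.finrank K L ≠ 1 → Nonempty (F →ₐ[K] L)) :
    IsCyclic (M ≃ₐ[K] M) := by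
  classical
  by_cases hM1 : Module.finrank K M = 1
  · have : Fintype.card (M ≃ₐ[K] M) = 1 := by
      rw [← Nat.card_eq_fintype_card, IsGalois.card_aut_eq_finrank, hM1]
    haveI : Subsingleton (M ≃ₐ[K] M) := Fintype.card_le_one_iff_subsingleton.mp this.le
    infer_instance
  obtain ⟨φ⟩ := hmin M hM1
  set F' : IntermediateField K M := φ.fieldRange with hF'def
  have hF'3 : Module.finrank K F' = 3 := by
    rw [← h3]
    exact ((AlgEquiv.ofInjectiveField φ).toLinearEquiv.finrank_eq).symm
  haveI hnormF' : Normal K F' :=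
    Normal.of_algEquiv (E := F) (AlgEquiv.ofInjectiveField φ)
  have hrange : ∀ ψ : F →ₐ[K] M, ψ.fieldRange = F' := by
    intro ψ
    have h := (IntermediateField.normal_iff_forall_fieldRange_eq
      (F := K) (K := F') (L := M)).mp hnormF'
      (ψ.comp ((AlgEquiv.ofInjectiveField φ).symm : F' ≃ₐ[K] F).toAlgHom)
    rw [← h]
    ext x
    simp only [AlgHom.mem_fieldRange, AlgHom.coe_comp, Function.comp_apply,
      AlgEquiv.coe_algHom]
    constructor
    · rintro ⟨y, rfl⟩
      refine ⟨(AlgEquiv.ofInjectiveField φ) y, ?_⟩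
      exact congrArg ψ ((AlgEquiv.ofInjectiveField φ).symm_apply_apply y)
    · rintro ⟨y, rfl⟩
      exact ⟨(AlgEquiv.ofInjectiveField φ).symm y, rfl⟩
  set N := IntermediateField.fixingSubgroup F' with hNdef
  have key : ∀ H : Subgroup (M ≃ₐ[K] M), H ≠ ⊤ → H ≤ N := by
    intro H hH
    set Fh := IntermediateField.fixedField H with hFhdef
    have hcardH : Module.finrank Fh M = Fintype.card H :=
      (IntermediateField.finrank_fixedField_eq_card H).trans Nat.card_eq_fintype_card
    have htower : Module.finrank K Fh * Module.finrank Fh M = Module.finrank K M :=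
      Module.finrank_mul_finrank K Fh M
    have hFh : Module.finrank K Fh ≠ 1 := by
      intro h1
      rw [h1, one_mul, hcardH, ← IsGalois.card_aut_eq_finrank K M] at htower
      exact hH (Subgroup.eq_top_of_card_eq H
        (by rw [Nat.card_eq_fintype_card, Nat.card_eq_fintype_card, htower, Nat.card_eq_fintype_card]))
    haveI : Algebra.IsSeparable K Fh :=
      Algebra.isSeparable_tower_bot_of_isSeparable K Fh M
    obtain ⟨ψ⟩ := hmin Fh hFh
    have hle : F' ≤ Fh := by
      rw [← hrange (Fh.val.comp ψ)]
      rintro x ⟨y, rfl⟩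
      exact (ψ y).2
    exact (IntermediateField.le_iff_le H F').mp hle
  have hNne : N ≠ ⊤ := by
    intro hNtop
    have h1 : Module.finrank K F' * Module.finrank F' M = Module.finrank K M :=
      Module.finrank_mul_finrank K F' M
    have h2 : Module.finrank F' M = Fintype.card N := by
      conv_lhs => rw [← IsGalois.fixedField_fixingSubgroup F']
      exact (IntermediateField.finrank_fixedField_eq_card N).trans Nat.card_eq_fintype_card
    have h4 : Fintype.card (⊤ : Subgroup (M ≃ₐ[K] M)) = Module.finrank K M := by
      rw [← IsGalois.card_aut_eq_finrank K M]
      exact (Fintype.card_congr Subgroup.topEquiv.toEquiv).trans Nat.card_eq_fintype_card.symm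
    rw [h2, hNtop, hF'3, h4] at h1
    have hMpos : 0 < Module.finrank K M := Module.finrank_pos
    omega
  obtain ⟨g, hg⟩ : ∃ g : (M ≃ₐ[K] M), g ∉ N := by
    by_contra hcon
    push_neg at hcon
    exact hNne ((Subgroup.eq_top_iff' N).mpr hcon)
  have hgen : Subgroup.zpowers g = ⊤ := by
    by_contra hcon
    exact hg (key _ hcon (Subgroup.mem_zpowers g))
  refine ⟨⟨g, fun x => ?_⟩⟩
  have hx : x ∈ Subgroup.zpowers g := by rw [hgen]; exact Subgroup.mem_top x
  exact hx

lemma finrank_fieldRange (K A B : Type) [Field K] [Field A] [Field B] [Algebra K A]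
    [Algebra K B] (f : A →ₐ[K] B) :
    Module.finrank K f.fieldRange = Module.finrank K A :=
  ((AlgEquiv.ofInjectiveField f).toLinearEquiv.finrank_eq).symm

lemma equiv_of_fieldRange_eq (K A B C : Type) [Field K] [Field A] [Field B] [Field C]
    [Algebra K A] [Algebra K B] [Algebra K C] (f : A →ₐ[K] C) (g : B →ₐ[K] C)
    (h : f.fieldRange = g.fieldRange) : Nonempty (A ≃ₐ[K] B) :=
  ⟨(AlgEquiv.ofInjectiveField f).trans
    ((IntermediateField.equivOfEq h).trans (AlgEquiv.ofInjectiveField g).symm)⟩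

/-- In a finite Galois extension with cyclic Galois group, intermediate fields of the
same degree coincide. -/
lemma aux_eq (K M : Type) [Field K] [Field M] [Algebra K M] [FiniteDimensional K M]
    [IsGalois K M] [IsCyclic (M ≃ₐ[K] M)] (E₁ E₂ : IntermediateField K M)
    (h : Module.finrank K E₁ = Module.finrank K E₂) (hpos : Module.finrank K E₁ ≠ 0) :
    E₁ = E₂ := by
  classical
  have hfix : IntermediateField.fixingSubgroup E₁ = IntermediateField.fixingSubgroup E₂ := by
    apply cyclic_subgroup_eq_of_card_eq
    have c₁ := IsGalois.card_fixingSubgroup_eq_finrank (F := K) (E := M) E₁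
    have c₂ := IsGalois.card_fixingSubgroup_eq_finrank (F := K) (E := M) E₂
    have t₁ : Module.finrank K E₁ * Module.finrank E₁ M = Module.finrank K M :=
      Module.finrank_mul_finrank K E₁ M
    have t₂ : Module.finrank K E₂ * Module.finrank E₂ M = Module.finrank K M :=
      Module.finrank_mul_finrank K E₂ M
    rw [← h] at t₂
    have heq : Module.finrank E₁ M = Module.finrank E₂ M :=
      Nat.eq_of_mul_eq_mul_left (Nat.pos_of_ne_zero hpos) (t₁.trans t₂.symm)
    rw [c₁, c₂, heq]
  rw [← IsGalois.fixedField_fixingSubgroup E₁, ← IsGalois.fixedField_fixingSubgroup E₂, hfix]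

theorem stmt6 (K F : Type) [Field K] [Field F] [Algebra K F] [IsGalois K F]
    (h3 : Module.finrank K F = 3)
    (hmin : ∀ (L : Type) [Field L] [Algebra K L] [FiniteDimensional K L]
      [Algebra.IsSeparable K L], Module.finrank K L ≠ 1 → Nonempty (F →ₐ[K] L)) :
    ∀ (n : ℕ) (L₁ L₂ : Type) [Field L₁] [Field L₂] [Algebra K L₁] [Algebra K L₂]
      [FiniteDimensional K L₁] [FiniteDimensional K L₂]
      [Algebra.IsSeparable K L₁] [Algebra.IsSeparable K L₂],
      Module.finrank K L₁ = n → Module.finrank K L₂ = n →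
      Nonempty (L₁ ≃ₐ[K] L₂) := by
  classical
  intro n L₁ L₂ _ _ _ _ _ _ _ _ hL₁ hL₂
  let Ω := AlgebraicClosure K
  let f₁ : L₁ →ₐ[K] Ω := IsAlgClosed.lift
  let f₂ : L₂ →ₐ[K] Ω := IsAlgClosed.lift
  let E₁ : IntermediateField K Ω := f₁.fieldRange
  let E₂ : IntermediateField K Ω := f₂.fieldRange
  let e₁ : L₁ ≃ₐ[K] E₁ := AlgEquiv.ofInjectiveField f₁
  let e₂ : L₂ ≃ₐ[K] E₂ := AlgEquiv.ofInjectiveField f₂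
  haveI : FiniteDimensional K E₁ := LinearEquiv.finiteDimensional e₁.toLinearEquiv
  haveI : FiniteDimensional K E₂ := LinearEquiv.finiteDimensional e₂.toLinearEquiv
  haveI : Algebra.IsSeparable K E₁ := Algebra.IsSeparable.of_algHom K L₁ e₁.symm.toAlgHom
  haveI : Algebra.IsSeparable K E₂ := Algebra.IsSeparable.of_algHom K L₂ e₂.symm.toAlgHom
  let E : IntermediateField K Ω := E₁ ⊔ E₂
  haveI : Algebra.IsSeparable K E := inferInstance
  let M : IntermediateField K Ω := IntermediateField.normalClosure K E Ω
  haveI hMfin : FiniteDimensional K M := normalClosure.is_finiteDimensional K E Ω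
  haveI hMnorm : Normal K M := normalClosure.normal K E Ω
  have hMsep' : M ≤ separableClosure K Ω := by
    refine normalClosure_le_iff.2 fun i => ?_
    have : Algebra.IsSeparable K i.fieldRange :=
      AlgEquiv.Algebra.isSeparable (AlgEquiv.ofInjectiveField i)
    exact le_separableClosure K Ω _
  haveI hMsep : Algebra.IsSeparable K M :=
    (le_separableClosure_iff K Ω M).mp hMsep'
  haveI : IsGalois K M := ⟨⟩
  have hEM : E ≤ M := IntermediateField.le_normalClosure E
  let ι₁ : L₁ →ₐ[K] M :=
    ((IntermediateField.inclusion (le_trans le_sup_left hEM)).comp e₁.toAlgHom)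
  let ι₂ : L₂ →ₐ[K] M :=
    ((IntermediateField.inclusion (le_trans le_sup_right hEM)).comp e₂.toAlgHom)
  haveI hcyc : IsCyclic (M ≃ₐ[K] M) := aux_cyclic K F M h3 hmin
  have hEq : ι₁.fieldRange = ι₂.fieldRange := by
    refine aux_eq K M _ _ ?_ ?_
    · rw [finrank_fieldRange K L₁ M ι₁, finrank_fieldRange K L₂ M ι₂, hL₁, hL₂]
    · rw [finrank_fieldRange K L₁ M ι₁, hL₁]
      have : 0 < n := hL₁ ▸ Module.finrank_pos
      omega
  exact equiv_of_fieldRange_eq K L₁ L₂ M ι₁ ι₂ hEq
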